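/- Fix K ≥ 2 and for d > max{K-1, 2} define g_k = ∑_{j=1}^{K-k+1} d^j = d(d^{K-k+1}-1)/(d-1) for k = 1,...,K, with uniform probabilities p_k = 1/K. Then the additive gap A(F_G^{(d)},1) = C_erg(F_G^{(d)}) - C_exp(F_G^{(d)},1) converges to log K as d → ∞. -/

import Mathlib

open Real Filter

open Finset

noncomputable def gg (K : ℕ) (d : ℝ) : ℕ → ℝ := fun k => ∑ j ∈ Finset.Icc 1 (K - k + 1), d ^ j

lemma gg_pos {K : ℕ} {d : ℝ} (hd : 0 < d) (k : ℕ) : 0 < gg K d k := by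
  unfold gg
  apply Finset.sum_pos
  · intro j hj; positivity
  · exact ⟨K - k + 1, by simp [Finset.mem_Icc]⟩

lemma gg_anti {K : ℕ} {d : ℝ} (hd : 0 ≤ d) {k k' : ℕ} (h : k ≤ k') : gg K d k' ≤ gg K d k := by
  unfold gg
  apply Finset.sum_le_sum_of_subset_of_nonneg
  · exact Finset.Icc_subset_Icc_right (by omega)
  · intro j _ _; positivity

lemma gg_succ {K : ℕ} (d : ℝ) {k : ℕ} (h : k < K) :
    gg K d k = gg K d (k+1) + d ^ (K - k + 1) := by
  unfold gg
  have h1 : K - (k+1) + 1 = K - k := by omega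
  rw [h1]
  exact Finset.sum_Icc_succ_top (by omega) _

lemma gg_top {K : ℕ} (d : ℝ) : gg K d K = d := by
  unfold gg
  rw [show K - K + 1 = 1 by omega]
  simp

lemma amgm_log {κ : ℝ} (hκ : 0 < κ) {A B : ℝ} (hA : 0 < A) (hB : 0 < B) :
    κ * log A + log B ≤ κ * log κ - (κ+1) * log (κ+1) + (κ+1) * log (A+B) := by
  have hκ1 : (0:ℝ) < κ + 1 := by linarith
  have hgm : ((κ+1)/κ*A) ^ (κ/(κ+1)) * ((κ+1)*B) ^ (1/(κ+1)) ≤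
      κ/(κ+1) * ((κ+1)/κ*A) + 1/(κ+1) * ((κ+1)*B) :=
    Real.geom_mean_le_arith_mean2_weighted (by positivity) (by positivity)
      (by positivity) (by positivity) (by field_simp)
  have hsum : κ/(κ+1) * ((κ+1)/κ*A) + 1/(κ+1) * ((κ+1)*B) = A + B := by field_simp
  rw [hsum] at hgm
  have hlog : log (((κ+1)/κ*A) ^ (κ/(κ+1)) * ((κ+1)*B) ^ (1/(κ+1))) ≤ log (A+B) :=
    Real.log_le_log (by positivity) hgm
  rw [Real.log_mul (by positivity) (by positivity), Real.log_rpow (by positivity),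
    Real.log_rpow (by positivity)] at hlog
  have e1 : log ((κ+1)/κ*A) = log (κ+1) - log κ + log A := by
    rw [Real.log_mul (by positivity) hA.ne', Real.log_div hκ1.ne' hκ.ne']
  have e2 : log ((κ+1)*B) = log (κ+1) + log B := Real.log_mul hκ1.ne' hB.ne'
  rw [e1, e2] at hlog
  have h2 := mul_le_mul_of_nonneg_left hlog hκ1.le
  have hc : (κ+1) * (κ/(κ+1)) = κ := by field_simp
  have hc2 : (κ+1) * (1/(κ+1)) = 1 := by field_simp
  rw [mul_add, ← mul_assoc, ← mul_assoc, hc, hc2, one_mul] at h2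
  linarith

lemma key_step {κ : ℝ} (hκ : 0 < κ) {β gk gk1 D : ℝ} (hβ : 0 ≤ β)
    (hg1 : 0 < gk1) (hD : 0 < D) (hdiff : gk = gk1 + D) :
    κ * log (1+β*gk) - (κ+1) * log (1+β*gk1) ≤
      κ * log κ - (κ+1) * log (κ+1) + (κ+1) * log gk - κ * log gk1 - log D := by
  have hgk : 0 < gk := by linarith
  have h1 : (0:ℝ) < 1 + β*gk := by nlinarith
  have h2 : (0:ℝ) < 1 + β*gk1 := by nlinarith
  have hA : 0 < gk1 * (1+β*gk) := by positivity
  have hAB : gk1 * (1+β*gk) + D = gk * (1+β*gk1) := by rw [hdiff]; ring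
  have h := amgm_log hκ hA hD
  rw [hAB, Real.log_mul hg1.ne' h1.ne', Real.log_mul hgk.ne' h2.ne'] at h
  linarith

lemma tendsto_pow_div_pow {j m : ℕ} (h : j < m) :
    Tendsto (fun d : ℝ => d ^ j / d ^ m) atTop (nhds 0) := by
  have h0 : Tendsto (fun d : ℝ => (d ^ (m - j))⁻¹) atTop (nhds 0) :=
    (tendsto_pow_atTop (by omega)).inv_tendsto_atTop
  refine h0.congr' ?_
  filter_upwards [eventually_gt_atTop (0:ℝ)] with d hd
  have hm : d ^ m = d ^ j * d ^ (m - j) := by rw [← pow_add]; congr 1; omega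
  rw [hm, div_mul_cancel_left₀ (by positivity)]

lemma tendsto_sum_pow_div {m : ℕ} (hm : 1 ≤ m) :
    Tendsto (fun d : ℝ => (∑ j ∈ Icc 1 m, d ^ j) / d ^ m) atTop (nhds 1) := by
  have h : Tendsto (fun d : ℝ => ∑ j ∈ Icc 1 m, d ^ j / d ^ m) atTop
      (nhds (∑ j ∈ Icc 1 m, if j = m then (1:ℝ) else 0)) := by
    apply tendsto_finset_sum
    intro j hj
    rw [Finset.mem_Icc] at hj
    by_cases hjm : j = m
    · subst hjm
      rw [if_pos rfl]
      apply Tendsto.congr' _ tendsto_const_nhds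
      filter_upwards [eventually_gt_atTop (0:ℝ)] with d hd
      rw [div_self (by positivity)]
    · rw [if_neg hjm]; exact tendsto_pow_div_pow (by omega)
  rw [Finset.sum_ite_eq' (Icc 1 m) m (fun _ => (1:ℝ)), if_pos (by simp [Finset.mem_Icc, hm])] at h
  exact h.congr fun d => (Finset.sum_div _ _ _).symm

lemma tendsto_sum_pow_div_zero {n m : ℕ} (h : n < m) :
    Tendsto (fun d : ℝ => (∑ j ∈ Icc 1 n, d ^ j) / d ^ m) atTop (nhds 0) := by
  have h0 : Tendsto (fun d : ℝ => ∑ j ∈ Icc 1 n, d ^ j / d ^ m) atTop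
      (nhds (∑ _j ∈ Icc 1 n, (0:ℝ))) := by
    apply tendsto_finset_sum
    intro j hj
    rw [Finset.mem_Icc] at hj
    exact tendsto_pow_div_pow (by omega)
  rw [Finset.sum_const, smul_zero] at h0
  exact h0.congr fun d => (Finset.sum_div _ _ _).symm

lemma tendsto_const_div_pow' (c : ℝ) (m : ℕ) (hm : 1 ≤ m) :
    Tendsto (fun d : ℝ => c / d ^ m) atTop (nhds 0) :=
  tendsto_const_nhds.div_atTop (tendsto_pow_atTop (by omega))

lemma tendsto_log_sub {m : ℕ} {P : ℝ → ℝ} {c : ℝ} (hc : 0 < c)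
    (h : Tendsto (fun d => P d / d ^ m) atTop (nhds c)) :
    Tendsto (fun d => log (P d) - (m : ℝ) * log d) atTop (nhds (log c)) := by
  have hlog : Tendsto (fun d => log (P d / d ^ m)) atTop (nhds (log c)) :=
    (Real.continuousAt_log hc.ne').tendsto.comp h
  refine hlog.congr' ?_
  filter_upwards [h.eventually (eventually_gt_nhds (show c/2 < c by linarith)),
    eventually_gt_atTop (0:ℝ)] with d hd1 hd2
  have hdm : (0:ℝ) < d ^ m := by positivity
  have hP : 0 < P d := by
    have : 0 < P d / d ^ m := lt_trans (by positivity) hd1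
    exact (div_pos_iff.mp this).resolve_right (fun ⟨_, h2⟩ => absurd hdm (not_lt.mpr h2.le)) |>.1
  rw [Real.log_div hP.ne' hdm.ne', Real.log_pow]

/-- Achievable expected-rate values of the one-block power allocation
program: maximize `∑_k F_k log((1+β_k g_k)/(1+β_{k-1} g_k))` over
`0 = β_0 ≤ β_1 ≤ ⋯ ≤ β_K ≤ 1`. -/
def CexpSet (K : ℕ) (g F : ℕ → ℝ) : Set ℝ :=
  {r | ∃ β : ℕ → ℝ, β 0 = 0 ∧ (∀ k, 1 ≤ k → k ≤ K → β (k - 1) ≤ β k) ∧ β K ≤ 1 ∧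
    r = ∑ k ∈ Finset.Icc 1 K,
      F k * Real.log ((1 + β k * g k) / (1 + β (k - 1) * g k))}


lemma one_add_mul_pos {β g : ℝ} (hβ : 0 ≤ β) (hg : 0 < g) : (0:ℝ) < 1 + β * g := by nlinarith

lemma value_range {K : ℕ} {d : ℝ} (hd : 0 < d) (β : ℕ → ℝ) (hβnn : ∀ k, k ≤ K → 0 ≤ β k) :
    ∑ k ∈ Icc 1 K, ((k:ℝ)/K) * log ((1 + β k * gg K d k) / (1 + β (k-1) * gg K d k))
    = (1/(K:ℝ)) * ∑ i ∈ range K, ((i:ℝ)+1) *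
        (log (1 + β (i+1) * gg K d (i+1)) - log (1 + β i * gg K d (i+1))) := by
  rw [← Finset.Ico_add_one_right_eq_Icc, Finset.sum_Ico_eq_sum_range, Finset.mul_sum]
  simp only [Nat.add_sub_cancel]
  apply Finset.sum_congr rfl
  intro i hi
  rw [Finset.mem_range] at hi
  rw [Nat.add_comm 1 i, Nat.add_sub_cancel]
  have h1 : (0:ℝ) < 1 + β (i+1) * gg K d (i+1) :=
    one_add_mul_pos (hβnn (i+1) (by omega)) (gg_pos hd _)
  have h2 : (0:ℝ) < 1 + β i * gg K d (i+1) :=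
    one_add_mul_pos (hβnn i (by omega)) (gg_pos hd _)
  rw [Real.log_div h1.ne' h2.ne']
  push_cast
  ring

lemma value_split {K : ℕ} (hK : 2 ≤ K) {d : ℝ} (hd : 0 < d) (β : ℕ → ℝ) (hβ0 : β 0 = 0)
    (hβnn : ∀ k, k ≤ K → 0 ≤ β k) :
    ∑ k ∈ Icc 1 K, ((k:ℝ)/K) * log ((1 + β k * gg K d k) / (1 + β (k-1) * gg K d k))
    = (1/(K:ℝ)) * ((∑ i ∈ range (K-1),
        (((i:ℝ)+1) * log (1 + β (i+1) * gg K d (i+1))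
          - (((i:ℝ)+1)+1) * log (1 + β (i+1) * gg K d (i+2))))
      + (K:ℝ) * log (1 + β K * gg K d K)) := by
  rw [value_range hd β hβnn]
  congr 1
  have hK1 : K - 1 + 1 = K := by omega
  have e2 : ∀ i ∈ range K,
      ((i:ℝ)+1) * (log (1 + β (i+1) * gg K d (i+1)) - log (1 + β i * gg K d (i+1)))
      = (((i:ℝ)+1) * log (1 + β (i+1) * gg K d (i+1)) - ((i:ℝ)+1) * log (1 + β i * gg K d (i+1))) :=
    fun i _ => by ring
  rw [Finset.sum_congr rfl e2, Finset.sum_sub_distrib]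
  have e1 := Finset.sum_range_succ
    (fun i => ((i:ℝ)+1) * log (1 + β (i+1) * gg K d (i+1))) (K-1)
  rw [hK1] at e1
  have e3 := Finset.sum_range_succ'
    (fun i => ((i:ℝ)+1) * log (1 + β i * gg K d (i+1))) (K-1)
  rw [hK1] at e3
  have e4 : ∑ i ∈ range K, ((i:ℝ)+1) * log (1 + β i * gg K d (i+1))
      = ∑ i ∈ range (K-1), (((i:ℝ)+1)+1) * log (1 + β (i+1) * gg K d (i+2)) := by
    rw [e3, hβ0]
    simp only [Nat.cast_zero, zero_mul, zero_add, mul_one, Real.log_one, mul_zero, add_zero]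
    apply Finset.sum_congr rfl
    intro i hi
    push_cast
    ring_nf
  rw [e1, e4]
  have e5 : ((K-1:ℕ):ℝ) + 1 = (K:ℝ) := by
    exact_mod_cast congrArg (Nat.cast : ℕ → ℝ) hK1
  rw [e5, Finset.sum_sub_distrib]
  ring

noncomputable def Tk (K : ℕ) (d : ℝ) (i : ℕ) : ℝ :=
  ((i:ℝ)+1) * log ((i:ℝ)+1) - (((i:ℝ)+1)+1) * log (((i:ℝ)+1)+1)
    + (((i:ℝ)+1)+1) * log (gg K d (i+1)) - ((i:ℝ)+1) * log (gg K d (i+2))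
    - log (d ^ (K-(i+1)+1))

noncomputable def Ubound (K : ℕ) (d : ℝ) : ℝ :=
  (1/(K:ℝ)) * ((∑ i ∈ range (K-1), Tk K d i) + (K:ℝ) * log (1 + gg K d K))

lemma beta_nonneg {K : ℕ} {β : ℕ → ℝ} (hβ0 : β 0 = 0)
    (hmono : ∀ k, 1 ≤ k → k ≤ K → β (k - 1) ≤ β k) :
    ∀ k, k ≤ K → 0 ≤ β k := by
  intro k hk
  induction k with
  | zero => simp [hβ0]
  | succ n ih =>
    have h1 := hmono (n+1) (by omega) hk
    simp only [Nat.add_sub_cancel] at h1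
    exact le_trans (ih (by omega)) h1

lemma mem_le_Ubound {K : ℕ} (hK : 2 ≤ K) {d : ℝ} (hd : 0 < d) {r : ℝ}
    (hr : r ∈ CexpSet K (gg K d) (fun k => (k:ℝ)/K)) : r ≤ Ubound K d := by
  obtain ⟨β, hβ0, hmono, hβK, rfl⟩ := hr
  have hβnn := beta_nonneg hβ0 hmono
  have hval := value_split hK hd β hβ0 hβnn
  simp only at hval ⊢
  rw [hval]
  unfold Ubound
  apply mul_le_mul_of_nonneg_left _ (by positivity)
  apply add_le_add
  · apply Finset.sum_le_sum
    intro i hi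
    rw [Finset.mem_range] at hi
    have hlt : i + 1 < K := by omega
    exact key_step (show (0:ℝ) < (i:ℝ)+1 by positivity) (hβnn (i+1) (by omega))
      (gg_pos hd (i+2)) (show (0:ℝ) < d ^ (K-(i+1)+1) by positivity) (gg_succ d hlt)
  · have hβKnn := hβnn K le_rfl
    have hg : 0 < gg K d K := gg_pos hd K
    have hlog : log (1 + β K * gg K d K) ≤ log (1 + gg K d K) := by
      apply Real.log_le_log (one_add_mul_pos hβKnn hg)
      nlinarith
    exact mul_le_mul_of_nonneg_left hlog (by positivity)

noncomputable def Lbound (K : ℕ) (d : ℝ) : ℝ :=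
  (1/(K:ℝ)) * ((∑ i ∈ range (K-1),
      ((i:ℝ)+1) * ((log (gg K d (i+2) + ((i:ℝ)+1) * gg K d (i+1)) - log (gg K d (i+2)))
        - log ((i:ℝ)+1)))
    + (K:ℝ) * (log (1 + gg K d K) - log (K:ℝ)))

noncomputable def betaW (K : ℕ) (d : ℝ) : ℕ → ℝ :=
  fun k => if k = 0 then 0 else if k < K then (k:ℝ) / gg K d (k+1) else 1

lemma betaW_zero (K : ℕ) (d : ℝ) : betaW K d 0 = 0 := by simp [betaW]

lemma betaW_mid {K k : ℕ} (d : ℝ) (h1 : 1 ≤ k) (h2 : k < K) :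
    betaW K d k = (k:ℝ)/gg K d (k+1) := by
  simp [betaW, show ¬(k = 0) by omega, h2]

lemma betaW_top {K : ℕ} (d : ℝ) (hK : 1 ≤ K) : betaW K d K = 1 := by
  simp [betaW, show ¬(K = 0) by omega, lt_irrefl]

lemma betaW_nonneg (K : ℕ) {d : ℝ} (hd : 0 < d) : ∀ k, k ≤ K → 0 ≤ betaW K d k := by
  intro k _
  unfold betaW
  split
  · exact le_refl 0
  · split
    · exact div_nonneg (by positivity) (gg_pos hd _).le
    · norm_num

lemma Ylog {K i : ℕ} {d : ℝ} (hd : 0 < d) (hi : i < K) :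
    log (1 + betaW K d i * gg K d (i+1)) = log ((i:ℝ)+1) := by
  by_cases h0 : i = 0
  · subst h0; rw [betaW_zero]; norm_num
  · rw [betaW_mid d (by omega) hi, div_mul_cancel₀ _ (gg_pos hd (i+1)).ne']
    try rw [add_comm]

lemma Xlog {K i : ℕ} {d : ℝ} (hd : 0 < d) (hi : i + 1 < K) :
    log (1 + betaW K d (i+1) * gg K d (i+1))
      = log (gg K d (i+2) + ((i:ℝ)+1) * gg K d (i+1)) - log (gg K d (i+2)) := by
  rw [betaW_mid d (by omega) hi]
  have h2 : (0:ℝ) < gg K d (i+2) := gg_pos hd _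
  have h1 : (0:ℝ) < gg K d (i+1) := gg_pos hd _
  have e : 1 + ((i+1:ℕ):ℝ)/gg K d (i+1+1) * gg K d (i+1)
      = (gg K d (i+2) + ((i:ℝ)+1) * gg K d (i+1)) / gg K d (i+2) := by
    push_cast
    field_simp
    try ring
  rw [e, Real.log_div (by positivity) h2.ne']

lemma Lbound_mem {K : ℕ} (hK : 2 ≤ K) {d : ℝ} (hdK : (K:ℝ) ≤ d) :
    Lbound K d ∈ CexpSet K (gg K d) (fun k => (k:ℝ)/K) := by
  have hK0 : (0:ℝ) < K := by exact_mod_cast (by omega : 0 < K)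
  have hd : 0 < d := hK0.trans_le hdK
  have hK1 : K - 1 + 1 = K := by omega
  have e5 : ((K-1:ℕ):ℝ) + 1 = (K:ℝ) := by
    exact_mod_cast congrArg (Nat.cast : ℕ → ℝ) hK1
  refine ⟨betaW K d, betaW_zero K d, ?_, by rw [betaW_top d (by omega)], ?_⟩
  · intro k hk1 hkK
    by_cases hkK' : k < K
    · rw [betaW_mid d hk1 hkK']
      by_cases hk1' : k = 1
      · subst hk1'
        rw [show (1:ℕ) - 1 = 0 from rfl, betaW_zero]
        exact div_nonneg (by positivity) (gg_pos hd _).le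
      · rw [betaW_mid d (by omega) (by omega), show k-1+1 = k by omega]
        apply div_le_div₀ (by positivity) ?_ (gg_pos hd (k+1)) (gg_anti hd.le (by omega))
        exact_mod_cast Nat.sub_le k 1
    · have hk' : K = k := by omega
      subst hk'

      rw [betaW_top d (by omega), betaW_mid d (by omega) (show K-1 < K by omega),
        show K-1+1 = K by omega, gg_top, div_le_one hd]
      calc ((K-1:ℕ):ℝ) ≤ (K:ℝ) := by exact_mod_cast Nat.sub_le K 1
        _ ≤ d := hdK
  · simp only
    rw [value_range hd _ (betaW_nonneg K hd)]
    have e1 := Finset.sum_range_succ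
      (fun i => ((i:ℝ)+1) * (log (1 + betaW K d (i+1) * gg K d (i+1))
        - log (1 + betaW K d i * gg K d (i+1)))) (K-1)
    rw [hK1] at e1
    rw [e1]
    unfold Lbound
    congr 1
    congr 1
    · apply Finset.sum_congr rfl
      intro i hi
      rw [Finset.mem_range] at hi
      rw [Xlog hd (by omega), Ylog hd (by omega)]
    · rw [betaW_top d (by omega), one_mul, betaW_mid d (by omega) (show K-1 < K by omega), hK1,
        div_mul_cancel₀ _ (gg_pos hd K).ne',
        show (1:ℝ) + ((K-1:ℕ):ℝ) = (K:ℝ) by rw [add_comm]; exact e5, e5]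

noncomputable def Cerg (K : ℕ) (d : ℝ) : ℝ :=
  ∑ k ∈ Icc 1 K, (1/(K:ℝ)) * log (1 + gg K d k)

noncomputable def aT (K k : ℕ) (d : ℝ) : ℝ := log (1 + gg K d k) - ((K-k+1:ℕ):ℝ) * log d
noncomputable def bT (K k : ℕ) (d : ℝ) : ℝ := log (gg K d k) - ((K-k+1:ℕ):ℝ) * log d

lemma tendsto_b (K k : ℕ) : Tendsto (bT K k) atTop (nhds 0) := by
  have hm : 1 ≤ K - k + 1 := by omega
  have h : Tendsto (fun d : ℝ => gg K d k / d ^ (K-k+1)) atTop (nhds 1) :=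
    (tendsto_sum_pow_div hm).congr fun d => rfl
  have h4 := tendsto_log_sub one_pos h
  rw [Real.log_one] at h4
  exact h4

lemma tendsto_a (K k : ℕ) : Tendsto (aT K k) atTop (nhds 0) := by
  have hm : 1 ≤ K - k + 1 := by omega
  have h2 := (tendsto_const_div_pow' 1 (K-k+1) hm).add (tendsto_sum_pow_div hm)
  rw [zero_add] at h2
  have h : Tendsto (fun d : ℝ => (1 + gg K d k) / d ^ (K-k+1)) atTop (nhds 1) :=
    h2.congr fun d => (add_div _ _ _).symm
  have h4 := tendsto_log_sub one_pos h
  rw [Real.log_one] at h4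
  exact h4

lemma tendsto_c (K k : ℕ) (hk1 : 1 ≤ k) (hkK : k < K) :
    Tendsto (fun d : ℝ => log (gg K d (k+1) + (k:ℝ) * gg K d k)
      - log (k:ℝ) - ((K-k+1:ℕ):ℝ) * log d) atTop (nhds 0) := by
  have hm : 1 ≤ K - k + 1 := by omega
  have hk0 : (0:ℝ) < k := by exact_mod_cast hk1
  have hz : Tendsto (fun d : ℝ => gg K d (k+1) / d ^ (K-k+1)) atTop (nhds 0) :=
    (tendsto_sum_pow_div_zero (show K-(k+1)+1 < K-k+1 by omega)).congr fun d => rfl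
  have hone := (tendsto_sum_pow_div hm).const_mul (k:ℝ)
  have hP : Tendsto (fun d : ℝ => (gg K d (k+1) + (k:ℝ) * gg K d k) / d ^ (K-k+1))
      atTop (nhds (k:ℝ)) := by
    have h3 := hz.add hone
    rw [zero_add, mul_one] at h3
    exact h3.congr fun d => by rw [add_div, mul_div_assoc]; rfl
  have h := (tendsto_log_sub hk0 hP).sub_const (log (k:ℝ))
  rw [sub_self] at h
  exact h.congr fun d => by ring

lemma cast_K1 {K : ℕ} (hK : 2 ≤ K) : ((K-1:ℕ):ℝ) = (K:ℝ) - 1 := by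
  rw [Nat.cast_sub (by omega)]; norm_num

lemma Cerg_split {K : ℕ} (hK : 2 ≤ K) (d : ℝ) :
    Cerg K d = (1/(K:ℝ)) * ((∑ i ∈ range (K-1), log (1 + gg K d (i+1))) + log (1 + gg K d K)) := by
  unfold Cerg
  rw [← Finset.mul_sum]
  congr 1
  rw [← Finset.Ico_add_one_right_eq_Icc, Finset.sum_Ico_eq_sum_range]
  simp only [Nat.add_sub_cancel]
  have hK1 : K - 1 + 1 = K := by omega
  have e1 := Finset.sum_range_succ (fun i => log (1 + gg K d (1+i))) (K-1)
  rw [hK1] at e1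
  rw [e1, show 1+(K-1) = K by omega]
  congr 1
  exact Finset.sum_congr rfl fun i _ => by rw [Nat.add_comm 1 i]

lemma sum_coef {K : ℕ} (hK : 2 ≤ K) :
    ∑ i ∈ range (K-1), ((K:ℝ) - 2*(i:ℝ) - 1) = (K:ℝ) - 1 := by
  have hg := Finset.sum_range_id_mul_two (K-1)
  rw [show K-1-1 = K-2 by omega] at hg
  have hg' : (∑ i ∈ range (K-1), (i:ℝ)) * 2 = ((K-1:ℕ):ℝ) * ((K-2:ℕ):ℝ) := by
    have h0 := congrArg (Nat.cast : ℕ → ℝ) hg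
    push_cast at h0
    exact_mod_cast h0
  have c1 : ((K-1:ℕ):ℝ) = (K:ℝ) - 1 := cast_K1 hK
  have c2 : ((K-2:ℕ):ℝ) = (K:ℝ) - 2 := by rw [Nat.cast_sub (by omega)]; norm_num
  rw [c1, c2] at hg'
  have e : ∀ i ∈ range (K-1), (K:ℝ) - 2*(i:ℝ) - 1 = ((K:ℝ) - 1) - 2*(i:ℝ) :=
    fun i _ => by ring
  rw [Finset.sum_congr rfl e, Finset.sum_sub_distrib, Finset.sum_const, ← Finset.mul_sum,
    nsmul_eq_mul, Finset.card_range, c1]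
  nlinarith [hg']

lemma sum_tel {K : ℕ} (hK : 2 ≤ K) :
    ∑ i ∈ range (K-1), ((((i:ℝ)+1)+1) * log (((i:ℝ)+1)+1) - ((i:ℝ)+1) * log ((i:ℝ)+1))
      = (K:ℝ) * log (K:ℝ) := by
  have h3 := Finset.sum_range_sub (fun n : ℕ => ((n:ℝ)+1) * log ((n:ℝ)+1)) (K-1)
  have h2 : ∑ i ∈ range (K-1), ((((i:ℝ)+1)+1) * log (((i:ℝ)+1)+1) - ((i:ℝ)+1) * log ((i:ℝ)+1))
      = ∑ i ∈ range (K-1), ((((i+1:ℕ):ℝ)+1) * log (((i+1:ℕ):ℝ)+1) - ((i:ℝ)+1) * log ((i:ℝ)+1)) :=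
    Finset.sum_congr rfl fun i _ => by push_cast; ring
  rw [h2, h3, cast_K1 hK, show (K:ℝ)-1+1 = (K:ℝ) by ring]
  norm_num

lemma CergU_eq {K : ℕ} (hK : 2 ≤ K) (d : ℝ) :
    Cerg K d - Ubound K d
      = (1/(K:ℝ)) * ((∑ i ∈ range (K-1),
          (aT K (i+1) d - (((i:ℝ)+1)+1) * bT K (i+1) d + ((i:ℝ)+1) * bT K (i+2) d))
        + (K:ℝ) * log (K:ℝ) - ((K:ℝ)-1) * aT K K d) := by
  rw [Cerg_split hK d]
  unfold Ubound
  rw [← mul_sub]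
  congr 1
  have per : ∀ i ∈ range (K-1),
      log (1 + gg K d (i+1)) - Tk K d i
        = (aT K (i+1) d - (((i:ℝ)+1)+1) * bT K (i+1) d + ((i:ℝ)+1) * bT K (i+2) d)
          + ((((i:ℝ)+1)+1) * log (((i:ℝ)+1)+1) - ((i:ℝ)+1) * log ((i:ℝ)+1))
          + ((K:ℝ) - 2*(i:ℝ) - 1) * log d := by
    intro i hi
    rw [Finset.mem_range] at hi
    unfold Tk aT bT
    rw [Real.log_pow]
    have c1 : ((K-(i+1)+1:ℕ):ℝ) = (K:ℝ) - (i:ℝ) := by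
      rw [show K-(i+1)+1 = K-i by omega, Nat.cast_sub (by omega)]
    have c2 : ((K-(i+2)+1:ℕ):ℝ) = (K:ℝ) - (i:ℝ) - 1 := by
      rw [show K-(i+2)+1 = K-(i+1) by omega, Nat.cast_sub (by omega)]
      push_cast; ring
    have c3 : ((K-K+1:ℕ):ℝ) = 1 := by rw [show K-K+1 = 1 by omega]; norm_num
    rw [c1, c2]
    ring
  have hsplit : ∑ i ∈ range (K-1), (log (1 + gg K d (i+1)) - Tk K d i)
      = (∑ i ∈ range (K-1),
          (aT K (i+1) d - (((i:ℝ)+1)+1) * bT K (i+1) d + ((i:ℝ)+1) * bT K (i+2) d))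
        + (K:ℝ) * log (K:ℝ) + ((K:ℝ)-1) * log d := by
    rw [Finset.sum_congr rfl per, Finset.sum_add_distrib, Finset.sum_add_distrib,
      sum_tel hK, ← Finset.sum_mul, sum_coef hK]
  have hsum := Finset.sum_sub_distrib (s := range (K-1))
    (f := fun i => log (1 + gg K d (i+1))) (g := fun i => Tk K d i)
  have haK : aT K K d = log (1 + gg K d K) - log d := by
    unfold aT
    rw [show K-K+1 = 1 by omega]
    norm_num
  rw [hsum] at hsplit
  rw [haK]
  linarith [hsplit]

lemma tendsto_CergU {K : ℕ} (hK : 2 ≤ K) :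
    Tendsto (fun d => Cerg K d - Ubound K d) atTop (nhds (log K)) := by
  have hK0 : (0:ℝ) < K := by exact_mod_cast (by omega : 0 < K)
  have hsum : Tendsto (fun d => ∑ i ∈ range (K-1),
      (aT K (i+1) d - (((i:ℝ)+1)+1) * bT K (i+1) d + ((i:ℝ)+1) * bT K (i+2) d)) atTop
      (nhds (∑ _i ∈ range (K-1), (0:ℝ))) := by
    apply tendsto_finset_sum
    intro i _
    have h1 := tendsto_a K (i+1)
    have h2 := (tendsto_b K (i+1)).const_mul (((i:ℝ)+1)+1)
    have h3 := (tendsto_b K (i+2)).const_mul ((i:ℝ)+1)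
    have := (h1.sub h2).add h3
    simpa using this
  rw [Finset.sum_const, smul_zero] at hsum
  have haK := (tendsto_a K K).const_mul ((K:ℝ)-1)
  rw [mul_zero] at haK
  have hfull := ((hsum.add_const ((K:ℝ) * log (K:ℝ))).sub haK).const_mul (1/(K:ℝ))
  rw [zero_add, sub_zero] at hfull
  have : (1/(K:ℝ)) * ((K:ℝ) * log (K:ℝ)) = log K := by field_simp
  rw [this] at hfull
  exact hfull.congr fun d => (CergU_eq hK d).symm

lemma CergL_eq {K : ℕ} (hK : 2 ≤ K) (d : ℝ) :
    Cerg K d - Lbound K d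
      = (1/(K:ℝ)) * ((∑ i ∈ range (K-1),
          (aT K (i+1) d
            - ((i:ℝ)+1) * (log (gg K d (i+2) + ((i+1:ℕ):ℝ) * gg K d (i+1))
                - log ((i+1:ℕ):ℝ) - ((K-(i+1)+1:ℕ):ℝ) * log d)
            + ((i:ℝ)+1) * bT K (i+2) d))
        + (K:ℝ) * log (K:ℝ) - ((K:ℝ)-1) * aT K K d) := by
  rw [Cerg_split hK d]
  unfold Lbound
  rw [← mul_sub]
  congr 1
  have per : ∀ i ∈ range (K-1),
      log (1 + gg K d (i+1))
        - ((i:ℝ)+1) * ((log (gg K d (i+2) + ((i:ℝ)+1) * gg K d (i+1)) - log (gg K d (i+2)))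
            - log ((i:ℝ)+1))
      = (aT K (i+1) d
          - ((i:ℝ)+1) * (log (gg K d (i+2) + ((i+1:ℕ):ℝ) * gg K d (i+1))
              - log ((i+1:ℕ):ℝ) - ((K-(i+1)+1:ℕ):ℝ) * log d)
          + ((i:ℝ)+1) * bT K (i+2) d)
        + ((K:ℝ) - 2*(i:ℝ) - 1) * log d := by
    intro i hi
    rw [Finset.mem_range] at hi
    unfold aT bT
    have c1 : ((K-(i+1)+1:ℕ):ℝ) = (K:ℝ) - (i:ℝ) := by
      rw [show K-(i+1)+1 = K-i by omega, Nat.cast_sub (by omega)]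
    have c2 : ((K-(i+2)+1:ℕ):ℝ) = (K:ℝ) - (i:ℝ) - 1 := by
      rw [show K-(i+2)+1 = K-(i+1) by omega, Nat.cast_sub (by omega)]
      push_cast; ring
    have c4 : ((i+1:ℕ):ℝ) = (i:ℝ)+1 := by push_cast; ring
    rw [c1, c2, c4]
    ring
  have hsum := Finset.sum_sub_distrib (s := range (K-1))
    (f := fun i => log (1 + gg K d (i+1)))
    (g := fun i => ((i:ℝ)+1) * ((log (gg K d (i+2) + ((i:ℝ)+1) * gg K d (i+1))
        - log (gg K d (i+2))) - log ((i:ℝ)+1)))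
  have hsplit : ∑ i ∈ range (K-1), (log (1 + gg K d (i+1))
      - ((i:ℝ)+1) * ((log (gg K d (i+2) + ((i:ℝ)+1) * gg K d (i+1)) - log (gg K d (i+2)))
          - log ((i:ℝ)+1)))
      = (∑ i ∈ range (K-1), (aT K (i+1) d
          - ((i:ℝ)+1) * (log (gg K d (i+2) + ((i+1:ℕ):ℝ) * gg K d (i+1))
              - log ((i+1:ℕ):ℝ) - ((K-(i+1)+1:ℕ):ℝ) * log d)
          + ((i:ℝ)+1) * bT K (i+2) d))
        + ((K:ℝ)-1) * log d := by
    rw [Finset.sum_congr rfl per, Finset.sum_add_distrib, ← Finset.sum_mul, sum_coef hK]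
  have haK : aT K K d = log (1 + gg K d K) - log d := by
    unfold aT
    rw [show K-K+1 = 1 by omega]
    norm_num
  rw [hsum] at hsplit
  rw [haK]
  linarith [hsplit]

lemma tendsto_CergL {K : ℕ} (hK : 2 ≤ K) :
    Tendsto (fun d => Cerg K d - Lbound K d) atTop (nhds (log K)) := by
  have hK0 : (0:ℝ) < K := by exact_mod_cast (by omega : 0 < K)
  have hsum : Tendsto (fun d => ∑ i ∈ range (K-1),
      (aT K (i+1) d
        - ((i:ℝ)+1) * (log (gg K d (i+2) + ((i+1:ℕ):ℝ) * gg K d (i+1))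
            - log ((i+1:ℕ):ℝ) - ((K-(i+1)+1:ℕ):ℝ) * log d)
        + ((i:ℝ)+1) * bT K (i+2) d)) atTop (nhds (∑ _i ∈ range (K-1), (0:ℝ))) := by
    apply tendsto_finset_sum
    intro i hi
    rw [Finset.mem_range] at hi
    have h1 := tendsto_a K (i+1)
    have h2 := (tendsto_c K (i+1) (by omega) (by omega)).const_mul ((i:ℝ)+1)
    have h3 := (tendsto_b K (i+2)).const_mul ((i:ℝ)+1)
    have h4 := (h1.sub h2).add h3
    simpa using h4
  rw [Finset.sum_const, smul_zero] at hsum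
  have haK := (tendsto_a K K).const_mul ((K:ℝ)-1)
  rw [mul_zero] at haK
  have hfull := ((hsum.add_const ((K:ℝ) * log (K:ℝ))).sub haK).const_mul (1/(K:ℝ))
  rw [zero_add, sub_zero] at hfull
  have hKlog : (1/(K:ℝ)) * ((K:ℝ) * log (K:ℝ)) = log K := by field_simp
  rw [hKlog] at hfull
  exact hfull.congr fun d => (CergL_eq hK d).symm


/-- Forward part of the worst-case additive gap: for the power-gain family
`g_k = ∑_{j=1}^{K-k+1} d^j` with uniform probabilities `p_k = 1/K`, the
additive gap between the ergodic capacity and the one-block expected capacity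
converges to `log K` as `d → ∞`. -/
theorem additive_gap_forward
    (K : ℕ) (hK : 2 ≤ K) :
    Tendsto
      (fun d : ℝ =>
        (∑ k ∈ Finset.Icc 1 K,
          (1 / (K : ℝ)) *
            Real.log (1 + ∑ j ∈ Finset.Icc 1 (K - k + 1), d ^ j)) -
        sSup (CexpSet K
          (fun k => ∑ j ∈ Finset.Icc 1 (K - k + 1), d ^ j)
          (fun k => (k : ℝ) / K)))
      atTop (nhds (Real.log K)) := by
  have hK0 : (0:ℝ) < K := by exact_mod_cast (by omega : 0 < K)
  apply tendsto_of_tendsto_of_tendsto_of_le_of_le' (tendsto_CergU hK) (tendsto_CergL hK)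
  · filter_upwards [eventually_ge_atTop (K:ℝ)] with d hd
    have hd0 : 0 < d := hK0.trans_le hd
    have hne : (CexpSet K (gg K d) (fun k => (k:ℝ)/K)).Nonempty := ⟨_, Lbound_mem hK hd⟩
    have hub : sSup (CexpSet K (gg K d) (fun k => (k:ℝ)/K)) ≤ Ubound K d :=
      csSup_le hne (fun r hr => mem_le_Ubound hK hd0 hr)
    show Cerg K d - Ubound K d ≤ Cerg K d - sSup (CexpSet K (gg K d) (fun k => (k:ℝ)/K))
    linarith
  · filter_upwards [eventually_ge_atTop (K:ℝ)] with d hd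
    have hd0 : 0 < d := hK0.trans_le hd
    have hbdd : BddAbove (CexpSet K (gg K d) (fun k => (k:ℝ)/K)) :=
      ⟨Ubound K d, fun r hr => mem_le_Ubound hK hd0 hr⟩
    have hlb : Lbound K d ≤ sSup (CexpSet K (gg K d) (fun k => (k:ℝ)/K)) :=
      le_csSup hbdd (Lbound_mem hK hd)
    show Cerg K d - sSup (CexpSet K (gg K d) (fun k => (k:ℝ)/K)) ≤ Cerg K d - Lbound K d
    linarith
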